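/- arXiv:2312.01475 — 3 statements merged into one kernel-verified Lean document; each statement's English description precedes it below -/
import Mathlib

section
/- Let Z₀(s) = (16 − 16s²)/(1+s²)³ for s ≥ 0, and for x > 0 let Ei(−x) = −∫_x^∞ e^{−t} t^{−1} dt denote the exponential integral. There exists C > 0 such that for every a ≥ 2, | ∫₀^∞ e^{−u²/4} Z₀(ua) u du + (2/a⁴)(Ei(−1/(4a²)) + 1) | ≤ C a^{−6} log a. -/
noncomputable section

open MeasureTheory Real Filter Set Topology

/-- the radial profile `Z₀(s) = (16 − 16s²)/(1+s²)³`. -/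
def Z0r (s : ℝ) : ℝ := (16 - 16 * s ^ 2) / (1 + s ^ 2) ^ 3

/-- `EiNeg x = Ei(−x) = −∫_x^∞ e^{−t}/t dt` for `x > 0`. -/
def EiNeg (x : ℝ) : ℝ := -∫ t in Ioi x, Real.exp (-t) / t

lemma lem_shift (f : ℝ → ℝ) (a c : ℝ) :
    ∫ x in Ioi a, f (x + c) = ∫ x in Ioi (a + c), f x := by
  have A : MeasurableEmbedding (fun x : ℝ => x + c) :=
    (Homeomorph.addRight c).isClosedEmbedding.measurableEmbedding
  have h1 : (∫ y in Ioi (a + c), f y ∂(Measure.map (fun x : ℝ => x + c) volume))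
      = ∫ x in (fun x : ℝ => x + c) ⁻¹' (Ioi (a + c)), f (x + c) := A.setIntegral_map _ _
  have h2 : (fun x : ℝ => x + c) ⁻¹' (Ioi (a + c)) = Ioi a := by
    ext x; simp
  rw [h2] at h1
  rw [h1.symm, map_add_right_eq_self]

lemma lem_integ {ε c C : ℝ} (hε : 0 < ε) {g : ℝ → ℝ}
    (hg : ContinuousOn g (Ioi c)) (hbd : ∀ w ∈ Ioi c, |g w| ≤ C) :
    IntegrableOn (fun w => Real.exp (-(ε * w)) * g w) (Ioi c) := by
  have hmaj : IntegrableOn (fun w => C * Real.exp (-ε * w)) (Ioi c) :=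
    (exp_neg_integrableOn_Ioi c hε).const_mul C
  refine Integrable.mono hmaj ?_ ?_
  · refine ContinuousOn.aestronglyMeasurable ?_ measurableSet_Ioi
    exact (Real.continuous_exp.comp (continuous_const.mul continuous_id).neg).continuousOn.mul hg
  · filter_upwards [ae_restrict_mem measurableSet_Ioi] with w hw
    have h1 : |g w| ≤ C := hbd w hw
    have h2 : (0:ℝ) < Real.exp (-(ε * w)) := Real.exp_pos _
    have h3 : Real.exp (-ε*w) = Real.exp (-(ε*w)) := by rw [neg_mul]
    simp only [norm_mul, Real.norm_eq_abs, abs_of_pos h2]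
    rw [h3, abs_of_pos h2]
    nlinarith [le_abs_self C, abs_nonneg (g w)]

lemma lem_intA {ε : ℝ} (hε : 0 < ε) :
    IntegrableOn (fun w => Real.exp (-(ε * w)) * (1 / (1 + w))) (Ioi 0) := by
  refine lem_integ hε ?_ (C := 1) ?_
  · refine ContinuousOn.div continuousOn_const (by fun_prop) ?_
    intro w hw; have : (0:ℝ) < w := hw; positivity
  · intro w hw
    have hw' : (0:ℝ) < w := hw
    rw [abs_of_pos (by positivity)]
    rw [div_le_iff₀ (by positivity)]
    linarith

lemma lem_intP {ε : ℝ} (hε : 0 < ε) :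
    IntegrableOn (fun w => Real.exp (-(ε * w)) * ((16 - 16 * w) / (1 + w) ^ 3)) (Ioi 0) := by
  refine lem_integ hε ?_ (C := 16) ?_
  · refine ContinuousOn.div (by fun_prop) (by fun_prop) ?_
    intro w hw; have : (0:ℝ) < w := hw; positivity
  · intro w hw
    have hw' : (0:ℝ) < w := hw
    have hd : (0:ℝ) < (1 + w) ^ 3 := by positivity
    rw [abs_div, abs_of_pos hd, div_le_iff₀ hd]
    have h1 : |16 - 16 * w| ≤ 16 * (1 + w) := by
      rw [abs_le]; constructor <;> nlinarith
    have h2 : 16 * (1 + w) ≤ 16 * (1 + w) ^ 3 := by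
      nlinarith [hw'.le, mul_nonneg hw'.le hw'.le, mul_nonneg (mul_nonneg hw'.le hw'.le) hw'.le]
    linarith

/-- FTC / integration by parts identity. -/
lemma lem_ftc {ε : ℝ} (hε : 0 < ε) :
    ∫ w in Ioi (0:ℝ), Real.exp (-(ε * w)) * ((16 - 16 * w) / (1 + w) ^ 3)
      = 16 * ε * (1 + ε) * (∫ w in Ioi (0:ℝ), Real.exp (-(ε * w)) * (1 / (1 + w))) - 16 * ε := by
  set Φ : ℝ → ℝ := fun w => Real.exp (-(ε * w)) * (16 * w / (1 + w) ^ 2 + 16 * ε / (1 + w)) with hΦ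
  set Φ' : ℝ → ℝ := fun w => Real.exp (-(ε * w)) * ((16 - 16 * w) / (1 + w) ^ 3)
      - 16 * ε * (1 + ε) * (Real.exp (-(ε * w)) * (1 / (1 + w))) with hΦ'
  have hderiv : ∀ x ∈ Ici (0:ℝ), HasDerivAt Φ (Φ' x) x := by
    intro x hx
    have hx0 : (0:ℝ) ≤ x := hx
    have hx1 : (0:ℝ) < 1 + x := by linarith
    have h1 : HasDerivAt (fun w : ℝ => 1 + w) 1 x := by
      simpa using (hasDerivAt_id x).const_add 1
    have h2 : HasDerivAt (fun w : ℝ => (1 + w) ^ 2) (2 * (1 + x)) x := by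
      simpa using h1.fun_pow 2
    have hnum : HasDerivAt (fun w : ℝ => 16 * w) 16 x := by
      simpa using (hasDerivAt_id x).const_mul (16:ℝ)
    have h3 : HasDerivAt (fun w : ℝ => 16 * w / (1 + w) ^ 2)
        ((16 * (1 + x) ^ 2 - 16 * x * (2 * (1 + x))) / ((1 + x) ^ 2) ^ 2) x :=
      hnum.div h2 (by positivity)
    have h4 : HasDerivAt (fun w : ℝ => 16 * ε / (1 + w))
        ((0 * (1 + x) - 16 * ε * 1) / (1 + x) ^ 2) x :=
      (hasDerivAt_const x (16 * ε)).div h1 hx1.ne'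
    have h5 : HasDerivAt (fun w : ℝ => Real.exp (-(ε * w))) (Real.exp (-(ε * x)) * (-ε)) x := by
      simpa using (((hasDerivAt_id x).const_mul ε).neg).exp
    have h6 := h5.mul (h3.add h4)
    have hne : (1 + x) ≠ 0 := hx1.ne'
    have heq : Φ' x = rexp (-(ε * x)) * -ε * (16 * x / (1 + x) ^ 2 + 16 * ε / (1 + x)) +
      rexp (-(ε * x)) *
        ((16 * (1 + x) ^ 2 - 16 * x * (2 * (1 + x))) / ((1 + x) ^ 2) ^ 2 +
          (0 * (1 + x) - 16 * ε * 1) / (1 + x) ^ 2) := by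
      simp only [hΦ']
      field_simp
      ring
    rw [heq]
    exact h6
  have f'int : IntegrableOn Φ' (Ioi 0) :=
    (lem_intP hε).sub ((lem_intA hε).const_mul _)
  have htend : Tendsto Φ atTop (𝓝 0) := by
    apply squeeze_zero_norm' (a := fun w => (16 + 16 * ε) * Real.exp (-(ε * w)))
    · filter_upwards [eventually_ge_atTop (0:ℝ)] with w hw
      have hw1 : (0:ℝ) < 1 + w := by linarith
      have e1 : 16 * w / (1 + w) ^ 2 ≤ 16 := by
        rw [div_le_iff₀ (by positivity)]; nlinarith
      have e2 : 16 * ε / (1 + w) ≤ 16 * ε := by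
        rw [div_le_iff₀ hw1]; nlinarith
      have hnn : 0 ≤ 16 * w / (1 + w) ^ 2 + 16 * ε / (1 + w) := by positivity
      have h2 : (0:ℝ) < Real.exp (-(ε * w)) := Real.exp_pos _
      simp only [Φ, norm_mul, Real.norm_eq_abs, abs_of_pos h2, abs_of_nonneg hnn]
      nlinarith
    · have ht : Tendsto (fun w : ℝ => ε * w) atTop atTop :=
        Tendsto.const_mul_atTop hε tendsto_id
      have := Real.tendsto_exp_neg_atTop_nhds_zero.comp ht
      have h := this.const_mul (16 + 16 * ε)
      simpa using h
  have key := integral_Ioi_of_hasDerivAt_of_tendsto' hderiv f'int htend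
  have hΦ0 : Φ 0 = 16 * ε := by simp [Φ]
  rw [hΦ0] at key
  have hsplit : ∫ w in Ioi (0:ℝ), Φ' w
      = (∫ w in Ioi (0:ℝ), Real.exp (-(ε * w)) * ((16 - 16 * w) / (1 + w) ^ 3))
        - 16 * ε * (1 + ε) * (∫ w in Ioi (0:ℝ), Real.exp (-(ε * w)) * (1 / (1 + w))) := by
    rw [integral_sub (lem_intP hε) ((lem_intA hε).const_mul _), integral_const_mul]
  rw [hsplit] at key
  linarith

lemma lem_Ei {ε : ℝ} (hε : 0 < ε) :
    ∫ t in Ioi ε, Real.exp (-t) / t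
      = Real.exp (-ε) * ∫ w in Ioi (0:ℝ), Real.exp (-(ε * w)) * (1 / (1 + w)) := by
  have h1 : ∫ t in Ioi ε, Real.exp (-t) / t
      = ∫ x in Ioi (0:ℝ), Real.exp (-(x + ε)) / (x + ε) := by
    rw [lem_shift (fun t => Real.exp (-t) / t) 0 ε, zero_add]
  have h2 : ∫ x in Ioi (0:ℝ), Real.exp (-(ε * x + ε)) / (ε * x + ε)
      = ε⁻¹ • ∫ x in Ioi (0:ℝ), Real.exp (-(x + ε)) / (x + ε) := by
    have := integral_comp_mul_left_Ioi (fun s => Real.exp (-(s + ε)) / (s + ε)) 0 hε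
    simpa using this
  have h3 : ∫ x in Ioi (0:ℝ), Real.exp (-(ε * x + ε)) / (ε * x + ε)
      = (Real.exp (-ε) / ε) * ∫ w in Ioi (0:ℝ), Real.exp (-(ε * w)) * (1 / (1 + w)) := by
    rw [← integral_const_mul]
    refine setIntegral_congr_fun measurableSet_Ioi (fun x hx => ?_)
    have hx' : (0:ℝ) < x := hx
    have h1x : (1:ℝ) + x ≠ 0 := by positivity
    rw [show (-(ε * x + ε)) = -ε + -(ε * x) by ring, Real.exp_add]
    field_simp
    ring
  rw [← h1, h3] at h2
  rw [smul_eq_mul] at h2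
  have hε' : ε ≠ 0 := hε.ne'
  field_simp at h2 ⊢
  linarith [h2]

lemma lem_sub {a : ℝ} (ha : 0 < a) :
    ∫ u in Ioi (0:ℝ), Real.exp (-(u ^ 2) / 4) * Z0r (u * a) * u
      = (1 / (2 * a ^ 2)) * ∫ w in Ioi (0:ℝ),
          Real.exp (-(1 / (4 * a ^ 2) * w)) * ((16 - 16 * w) / (1 + w) ^ 3) := by
  set ε : ℝ := 1 / (4 * a ^ 2) with hεdef
  have ha2 : (0:ℝ) < a ^ 2 := by positivity
  set g : ℝ → ℝ := fun v => (1/2) * (Real.exp (-v / 4) * ((16 - 16 * (a ^ 2 * v)) / (1 + a ^ 2 * v) ^ 3)) with hg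
  have step1 : ∫ u in Ioi (0:ℝ), Real.exp (-(u ^ 2) / 4) * Z0r (u * a) * u
      = ∫ v in Ioi (0:ℝ), g v := by
    rw [← integral_comp_rpow_Ioi g (p := 2) two_ne_zero]
    refine setIntegral_congr_fun measurableSet_Ioi (fun x hx => ?_)
    have hx' : (0:ℝ) < x := hx
    rw [show ((2:ℝ)) - 1 = 1 by norm_num, Real.rpow_one,
      show x ^ (2:ℝ) = x ^ 2 from by
        rw [show (2:ℝ) = ((2:ℕ):ℝ) by norm_num, Real.rpow_natCast]]
    simp only [Z0r, hg, smul_eq_mul, abs_two]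
    have e4 : (x * a) ^ 2 = a ^ 2 * x ^ 2 := by ring
    rw [e4]
    ring
  have step2 : ∀ v : ℝ, g v = (1/2) * (Real.exp (-(ε * (a ^ 2 * v))) * ((16 - 16 * (a ^ 2 * v)) / (1 + a ^ 2 * v) ^ 3)) := by
    intro v
    have : -v / 4 = -(ε * (a ^ 2 * v)) := by
      rw [hεdef]; field_simp
    simp only [hg]
    rw [this]
  have step3 : ∫ v in Ioi (0:ℝ), g v
      = (1/2) * ((a ^ 2)⁻¹ * ∫ w in Ioi (0:ℝ), Real.exp (-(ε * w)) * ((16 - 16 * w) / (1 + w) ^ 3)) := by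
    have hc := integral_comp_mul_left_Ioi
      (fun w => Real.exp (-(ε * w)) * ((16 - 16 * w) / (1 + w) ^ 3)) 0 ha2
    rw [mul_zero] at hc
    rw [show (∫ v in Ioi (0:ℝ), g v) = ∫ v in Ioi (0:ℝ),
        (1/2) * (Real.exp (-(ε * (a ^ 2 * v))) * ((16 - 16 * (a ^ 2 * v)) / (1 + a ^ 2 * v) ^ 3))
      from setIntegral_congr_fun measurableSet_Ioi (fun v _ => step2 v)]
    rw [integral_const_mul, hc, smul_eq_mul]
  rw [step1, step3]
  field_simp
  congr 1; ext w; ring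

lemma lem_Abound {a : ℝ} (ha : 2 ≤ a) :
    ∫ w in Ioi (0:ℝ), Real.exp (-(1 / (4 * a ^ 2) * w)) * (1 / (1 + w)) ≤ 7 * Real.log a := by
  have ha0 : (0:ℝ) < a := lt_of_lt_of_le two_pos ha
  set ε : ℝ := 1 / (4 * a ^ 2) with hεdef
  have hε : 0 < ε := by positivity
  set T : ℝ := 4 * a ^ 2 with hTdef
  have hT0 : (0:ℝ) < T := by positivity
  have hεT : ε * T = 1 := by rw [hεdef, hTdef]; field_simp
  have hloga : Real.log 2 ≤ Real.log a := Real.log_le_log two_pos ha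
  have hlog2 : (0.5:ℝ) ≤ Real.log 2 := by
    have := Real.log_two_gt_d9; linarith
  set f : ℝ → ℝ := fun w => Real.exp (-(ε * w)) * (1 / (1 + w)) with hf
  have intf : IntegrableOn f (Ioi 0) := lem_intA hε
  have intf1 : IntegrableOn f (Ioc 0 T) := intf.mono_set Ioc_subset_Ioi_self
  have intf2 : IntegrableOn f (Ioi T) := intf.mono_set (Ioi_subset_Ioi hT0.le)
  have hsplit : ∫ w in Ioi (0:ℝ), f w = (∫ w in Ioc 0 T, f w) + ∫ w in Ioi T, f w := by
    rw [← setIntegral_union (Ioc_disjoint_Ioi le_rfl) measurableSet_Ioi intf1 intf2,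
      Ioc_union_Ioi_eq_Ioi hT0.le]
  -- head
  have intg : IntegrableOn (fun w : ℝ => 1 / (1 + w)) (Ioc 0 T) := by
    refine (ContinuousOn.integrableOn_Icc ?_).mono_set Ioc_subset_Icc_self
    refine ContinuousOn.div continuousOn_const (by fun_prop) ?_
    intro w hw
    have : (0:ℝ) ≤ w := hw.1
    positivity
  have hhead : (∫ w in Ioc 0 T, f w) ≤ ∫ w in Ioc (0:ℝ) T, 1 / (1 + w) := by
    refine setIntegral_mono_on intf1 intg measurableSet_Ioc (fun w hw => ?_)
    have hw0 : (0:ℝ) < w := hw.1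
    have he : Real.exp (-(ε * w)) ≤ 1 := by
      rw [← Real.exp_zero]
      exact Real.exp_le_exp.mpr (by nlinarith)
    have hpos : (0:ℝ) ≤ 1 / (1 + w) := by positivity
    calc f w = Real.exp (-(ε * w)) * (1 / (1 + w)) := rfl
    _ ≤ 1 * (1 / (1 + w)) := mul_le_mul_of_nonneg_right he hpos
    _ = 1 / (1 + w) := one_mul _
  have hval : ∫ w in Ioc (0:ℝ) T, 1 / (1 + w) = Real.log (1 + T) := by
    rw [← intervalIntegral.integral_of_le hT0.le]
    have hFTC := intervalIntegral.integral_eq_sub_of_hasDerivAt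
      (f := fun w : ℝ => Real.log (1 + w)) (f' := fun w : ℝ => 1 / (1 + w))
      (a := (0:ℝ)) (b := T) ?_ ?_
    · rw [hFTC]; simp
    · intro x hx
      rw [Set.uIcc_of_le hT0.le] at hx
      have hx1 : (0:ℝ) < 1 + x := by have := hx.1; linarith
      have h1 : HasDerivAt (fun w : ℝ => 1 + w) 1 x := by
        simpa using (hasDerivAt_id x).const_add (1:ℝ)
      have := (Real.hasDerivAt_log hx1.ne').comp x h1
      simpa [one_div, Function.comp_def] using this
    · apply ContinuousOn.intervalIntegrable
      rw [Set.uIcc_of_le hT0.le]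
      refine ContinuousOn.div continuousOn_const (by fun_prop) ?_
      intro w hw
      have : (0:ℝ) ≤ w := hw.1
      positivity
  have hheadbd : Real.log (1 + T) ≤ 5 * Real.log a := by
    have h1 : (1:ℝ) + T ≤ a ^ 5 := by
      rw [hTdef]
      nlinarith [sq_nonneg a, sq_nonneg (a^2), pow_pos ha0 2, pow_pos ha0 3]
    calc Real.log (1 + T) ≤ Real.log (a ^ 5) := Real.log_le_log (by positivity) h1
    _ = 5 * Real.log a := by rw [Real.log_pow]; norm_num
  -- tail
  have intmaj : IntegrableOn (fun w : ℝ => ε * Real.exp (-(ε * w))) (Ioi T) := by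
    have h := (exp_neg_integrableOn_Ioi T hε).const_mul ε
    have he : (fun w : ℝ => ε * Real.exp (-ε * w)) = fun w : ℝ => ε * Real.exp (-(ε * w)) := by
      funext w; rw [neg_mul]
    rwa [he] at h
  have htail : (∫ w in Ioi T, f w) ≤ ∫ w in Ioi T, ε * Real.exp (-(ε * w)) := by
    refine setIntegral_mono_on intf2 intmaj measurableSet_Ioi (fun w hw => ?_)
    have hwT : T < w := hw
    have hw1 : (0:ℝ) < 1 + w := by linarith
    have hle : 1 / (1 + w) ≤ ε := by
      rw [div_le_iff₀ hw1]
      nlinarith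
    calc f w = Real.exp (-(ε * w)) * (1 / (1 + w)) := rfl
    _ ≤ Real.exp (-(ε * w)) * ε := mul_le_mul_of_nonneg_left hle (Real.exp_pos _).le
    _ = ε * Real.exp (-(ε * w)) := mul_comm _ _
  have hval2 : ∫ w in Ioi T, ε * Real.exp (-(ε * w)) = Real.exp (-(ε * T)) := by
    rw [integral_const_mul]
    have h := integral_comp_mul_left_Ioi (fun x : ℝ => Real.exp (-x)) T hε
    rw [h, integral_exp_neg_Ioi, smul_eq_mul]
    field_simp
  have htailbd : Real.exp (-(ε * T)) ≤ 2 * Real.log a := by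
    rw [hεT]
    have : Real.exp (-1) ≤ 1 := by
      rw [← Real.exp_zero]; exact Real.exp_le_exp.mpr (by norm_num)
    linarith
  calc ∫ w in Ioi (0:ℝ), f w = (∫ w in Ioc 0 T, f w) + ∫ w in Ioi T, f w := hsplit
  _ ≤ 5 * Real.log a + 2 * Real.log a := by
      have := hhead.trans (le_of_eq hval)
      have := htail.trans (le_of_eq hval2)
      linarith [hhead.trans (le_of_eq hval) |>.trans hheadbd,
        (htail.trans (le_of_eq hval2)).trans htailbd]
  _ = 7 * Real.log a := by ring

theorem statement5 :
    ∃ C > (0 : ℝ), ∀ a : ℝ, 2 ≤ a →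
      |(∫ u in Ioi (0 : ℝ), Real.exp (-(u ^ 2) / 4) * Z0r (u * a) * u) +
          (2 / a ^ 4) * (EiNeg (1 / (4 * a ^ 2)) + 1)| ≤
        C * a ^ (-6 : ℤ) * Real.log a := by
  refine ⟨7, by norm_num, fun a ha => ?_⟩
  have ha0 : (0:ℝ) < a := lt_of_lt_of_le two_pos ha
  set ε : ℝ := 1 / (4 * a ^ 2) with hεdef
  have hε : 0 < ε := by positivity
  set A : ℝ := ∫ w in Ioi (0:ℝ), Real.exp (-(ε * w)) * (1 / (1 + w)) with hA
  have hAnn : 0 ≤ A := by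
    rw [hA]
    refine setIntegral_nonneg measurableSet_Ioi (fun w hw => ?_)
    have : (0:ℝ) < w := hw
    positivity
  have hAbd : A ≤ 7 * Real.log a := lem_Abound ha
  have hEi : EiNeg ε = -(Real.exp (-ε) * A) := by
    rw [EiNeg, lem_Ei hε, hA]
  have hsum : (∫ u in Ioi (0 : ℝ), Real.exp (-(u ^ 2) / 4) * Z0r (u * a) * u) +
      (2 / a ^ 4) * (EiNeg ε + 1) = (2 / a ^ 4) * A * (1 + ε - Real.exp (-ε)) := by
    rw [lem_sub ha0, ← hεdef, lem_ftc hε, ← hA, hEi, hεdef]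
    field_simp
    ring
  rw [hsum]
  have hfac : 0 ≤ 1 + ε - Real.exp (-ε) := by
    have : Real.exp (-ε) ≤ 1 := by
      rw [← Real.exp_zero]; exact Real.exp_le_exp.mpr (by linarith)
    linarith
  have hfac2 : 1 + ε - Real.exp (-ε) ≤ 2 * ε := by
    have := Real.add_one_le_exp (-ε)
    linarith
  have hloga : 0 ≤ Real.log a := Real.log_nonneg (by linarith)
  rw [abs_of_nonneg (by positivity)]
  have key : (2 / a ^ 4) * A * (1 + ε - Real.exp (-ε))
      ≤ (2 / a ^ 4) * (7 * Real.log a) * (2 * ε) := by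
    have h1 : (2 / a ^ 4) * A ≤ (2 / a ^ 4) * (7 * Real.log a) :=
      mul_le_mul_of_nonneg_left hAbd (by positivity)
    have h2 : (0:ℝ) ≤ (2 / a ^ 4) * A := by positivity
    nlinarith
  refine key.trans (le_of_eq ?_)
  have hz : a ^ (-6 : ℤ) = (a ^ 6)⁻¹ := by
    rw [zpow_neg]
    norm_cast
  rw [hz, hεdef]
  field_simp
  ring_nf
end
end

section
/- Let σ > 1 and let I ⊆ ℝ be an open interval. Suppose φ : ℝ² × I → ℝ is such that each φ(·,τ) is continuous with ∫_{ℝ²} φ(y,τ) dy = 0 and |φ(y,τ)| ≤ (1+|y|)^{−2−σ}, and φ is differentiable in τ with |∂_τφ(y,τ)| ≤ (1+|y|)^{−2−σ}. For each τ set g^⊥(·,τ) = φ(·,τ)/U − (−Δ)⁻¹φ(·,τ) + a(τ), where a(τ) = (1/(8π)) ∫_{ℝ²} Γ₀ φ(y,τ) dy. Then τ ↦ ∫_{ℝ²} φ(·,τ) g^⊥(·,τ) dy is differentiable on I and ∫_{ℝ²} ∂_τφ(·,τ) g^⊥(·,τ) dy = (1/2) (d/dτ) ∫_{ℝ²} φ(·,τ)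 g^⊥(·,τ) dy. -/
noncomputable section

open MeasureTheory Real Filter Set Topology

abbrev R2 : Type := EuclideanSpace ℝ (Fin 2)

/-- the steady state `U(y) = 8/(1+|y|²)²`. -/
def U2 (y : R2) : ℝ := 8 / (1 + ‖y‖ ^ 2) ^ 2

/-- `Γ₀ = log U`. -/
def Γ0 (y : R2) : ℝ := Real.log (U2 y)

/-- logarithmic Newtonian potential `(-Δ)⁻¹φ`. -/
def invLap (φ : R2 → ℝ) (y : R2) : ℝ :=
  (1 / (2 * π)) * ∫ z : R2, Real.log (1 / ‖y - z‖) * φ z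






def wt (σ : ℝ) (y : R2) : ℝ := (1 + ‖y‖) ^ (-(2+σ))

lemma one_add_norm_pos (y : R2) : (0:ℝ) < 1 + ‖y‖ := by positivity

lemma wt_nonneg (σ : ℝ) (y : R2) : 0 ≤ wt σ y := Real.rpow_nonneg (by positivity) _

lemma wt_le_one {σ : ℝ} (hσ : 1 < σ) (y : R2) : wt σ y ≤ 1 :=
  Real.rpow_le_one_of_one_le_of_nonpos (by linarith [norm_nonneg y]) (by linarith)

lemma wt_cont (σ : ℝ) : Continuous (wt σ) := by
  apply Continuous.rpow_const (by continuity)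
  exact fun y => Or.inl (one_add_norm_pos y).ne'

lemma finrank_R2 : (Module.finrank ℝ R2 : ℝ) = 2 := by simp

lemma wt_int {σ : ℝ} (hσ : 1 < σ) : Integrable (wt σ) := by
  have h : (Module.finrank ℝ R2 : ℝ) < 2 + σ := by rw [finrank_R2]; linarith
  unfold wt; exact integrable_one_add_norm (E := R2) (μ := volume) h

lemma w2σ_int {σ : ℝ} (hσ : 1 < σ) :
    Integrable (fun y : R2 => (1 + ‖y‖) ^ (-(2*σ))) := by
  have h : (Module.finrank ℝ R2 : ℝ) < 2 * σ := by rw [finrank_R2]; linarith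
  exact integrable_one_add_norm (E := R2) (μ := volume) h

lemma U2_pos (y : R2) : 0 < U2 y := by
  have : (0:ℝ) < 1 + ‖y‖^2 := by positivity
  unfold U2; positivity

lemma U2_cont : Continuous U2 := by
  unfold U2
  apply Continuous.div continuous_const (by continuity)
  intro y
  have : (0:ℝ) < 1 + ‖y‖^2 := by positivity
  positivity

lemma sq_bound {σ : ℝ} (y : R2) :
    wt σ y * wt σ y / U2 y ≤ (1/8) * (1 + ‖y‖) ^ (-(2*σ)) := by
  have hx : (0:ℝ) < 1 + ‖y‖ := one_add_norm_pos y
  have h1 : (1:ℝ) + ‖y‖^2 ≤ (1 + ‖y‖)^2 := by nlinarith [norm_nonneg y]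
  have hU : U2 y = 8 / (1 + ‖y‖^2)^2 := rfl
  have h2 : wt σ y * wt σ y / U2 y = wt σ y * wt σ y * (1 + ‖y‖^2)^2 / 8 := by
    rw [hU]; field_simp
  rw [h2]
  have h3 : wt σ y * wt σ y * (1 + ‖y‖^2)^2 ≤ wt σ y * wt σ y * ((1+‖y‖)^2)^2 := by
    have := wt_nonneg σ y
    have h4 : ((1:ℝ) + ‖y‖^2)^2 ≤ ((1+‖y‖)^2)^2 := by
      apply pow_le_pow_left₀ (by positivity) h1
    nlinarith [this]
  have h5 : wt σ y * wt σ y * ((1+‖y‖)^2)^2 = (1 + ‖y‖) ^ (-(2*σ)) := by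
    rw [wt]
    rw [show ((1+‖y‖)^2)^2 = (1+‖y‖)^(4:ℕ) by ring]
    rw [← Real.rpow_natCast (1+‖y‖) 4, ← Real.rpow_add hx, ← Real.rpow_add hx]
    norm_num
    ring_nf
  calc wt σ y * wt σ y * (1 + ‖y‖^2)^2 / 8
      ≤ wt σ y * wt σ y * ((1+‖y‖)^2)^2 / 8 := by linarith
    _ = (1/8) * (1 + ‖y‖) ^ (-(2*σ)) := by rw [h5]; ring

lemma log_le_rpow {x ε : ℝ} (hx : 1 ≤ x) (hε : 0 < ε) : Real.log x ≤ x ^ ε / ε := by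
  have hx0 : (0:ℝ) < x := by linarith
  have h1 : Real.log (x ^ ε) ≤ x ^ ε - 1 := Real.log_le_sub_one_of_pos (Real.rpow_pos_of_pos hx0 ε)
  rw [Real.log_rpow hx0] at h1
  have h2 : ε * Real.log x ≤ x ^ ε := by
    have : (0:ℝ) < x ^ ε := Real.rpow_pos_of_pos hx0 ε
    linarith
  calc Real.log x = (ε * Real.log x) / ε := by field_simp
    _ ≤ x ^ ε / ε := by gcongr

lemma logwt_int {σ : ℝ} (hσ : 1 < σ) :
    Integrable (fun y : R2 => Real.log (2 + ‖y‖) * wt σ y) := by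
  set ε : ℝ := (σ-1)/2 with hεdef
  have hε : 0 < ε := by simp only [hεdef]; linarith
  have hσ' : 1 < σ - ε := by simp only [hεdef]; linarith
  have hbd : ∀ y : R2, ‖Real.log (2 + ‖y‖) * wt σ y‖ ≤
      (2^ε/ε) * (1 + ‖y‖) ^ (-(2+(σ-ε))) := by
    intro y
    have hx : (0:ℝ) < 1 + ‖y‖ := one_add_norm_pos y
    have hlog0 : 0 ≤ Real.log (2 + ‖y‖) := Real.log_nonneg (by linarith [norm_nonneg y])
    have h1 : Real.log (2 + ‖y‖) ≤ (2 + ‖y‖) ^ ε / ε :=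
      log_le_rpow (by linarith [norm_nonneg y]) hε
    have h2 : (2 + ‖y‖ : ℝ) ≤ 2 * (1 + ‖y‖) := by linarith [norm_nonneg y]
    have h3 : (2 + ‖y‖ : ℝ) ^ ε ≤ (2 * (1 + ‖y‖)) ^ ε := by
      apply Real.rpow_le_rpow (by linarith [norm_nonneg y]) h2 hε.le
    have h4 : (2 * (1 + ‖y‖) : ℝ) ^ ε = 2 ^ ε * (1 + ‖y‖) ^ ε :=
      Real.mul_rpow (by norm_num) hx.le
    have h5 : Real.log (2 + ‖y‖) ≤ (2^ε/ε) * (1 + ‖y‖) ^ ε := by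
      rw [h4] at h3
      calc Real.log (2 + ‖y‖) ≤ (2 + ‖y‖) ^ ε / ε := h1
        _ ≤ (2 ^ ε * (1 + ‖y‖) ^ ε) / ε := by gcongr
        _ = (2^ε/ε) * (1 + ‖y‖) ^ ε := by ring
    have hw0 : 0 ≤ wt σ y := wt_nonneg σ y
    have h6 : (1 + ‖y‖:ℝ) ^ ε * wt σ y = (1 + ‖y‖) ^ (-(2+(σ-ε))) := by
      rw [wt, ← Real.rpow_add hx]; ring_nf
    rw [Real.norm_eq_abs, abs_of_nonneg (by positivity)]
    calc Real.log (2 + ‖y‖) * wt σ y ≤ ((2^ε/ε) * (1 + ‖y‖) ^ ε) * wt σ y := by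
          apply mul_le_mul_of_nonneg_right h5 hw0
      _ = (2^ε/ε) * ((1 + ‖y‖) ^ ε * wt σ y) := by ring
      _ = (2^ε/ε) * (1 + ‖y‖) ^ (-(2+(σ-ε))) := by rw [h6]
  have hgint := (wt_int hσ').const_mul (2^ε/ε)
  unfold wt at hgint
  exact Integrable.mono' hgint
    ((((continuous_const.add continuous_norm).log
        (fun y => by show (2:ℝ) + ‖y‖ ≠ 0; positivity)).mul (wt_cont σ)).aestronglyMeasurable)
    (ae_of_all _ hbd)

noncomputable def g1 : ℝ → ℝ := Set.indicator (Icc (-1:ℝ) 1) (fun t => |t| ^ (-(4:ℝ)⁻¹ : ℝ))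

lemma g1_nonneg (t : ℝ) : 0 ≤ g1 t := by
  unfold g1
  apply Set.indicator_nonneg
  intro t _
  positivity

lemma g1_meas : Measurable g1 := by
  unfold g1
  exact Measurable.indicator (measurable_abs.pow_const _) measurableSet_Icc

lemma g1_int : Integrable g1 := by
  unfold g1
  rw [integrable_indicator_iff measurableSet_Icc]
  have hIcc : Icc (-1:ℝ) 1 = Icc (-1) 0 ∪ Icc 0 1 := (Set.Icc_union_Icc_eq_Icc (by norm_num) (by norm_num)).symm
  rw [hIcc]
  apply IntegrableOn.union
  · -- on [-1,0]
    have h1 : IntegrableOn (fun t : ℝ => |t| ^ (-(4:ℝ)⁻¹ : ℝ)) (Icc 0 1) volume := by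
      have hb : IntervalIntegrable (fun x : ℝ => x ^ (-(4:ℝ)⁻¹ : ℝ)) volume 0 1 :=
        intervalIntegral.intervalIntegrable_rpow' (by norm_num)
      have := (intervalIntegrable_iff_integrableOn_Icc_of_le (by norm_num : (0:ℝ) ≤ 1)).mp hb
      apply this.congr_fun ?_ measurableSet_Icc
      intro t ht
      simp only []
      rw [abs_of_nonneg ht.1]
    have h2 : Integrable (Set.indicator (Icc (0:ℝ) 1) (fun t => |t| ^ (-(4:ℝ)⁻¹ : ℝ))) volume := by
      rwa [integrable_indicator_iff measurableSet_Icc]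
    have h3 := h2.comp_neg
    have h4 : (fun t : ℝ => Set.indicator (Icc (0:ℝ) 1) (fun s => |s| ^ (-(4:ℝ)⁻¹ : ℝ)) (-t)) =
        Set.indicator (Icc (-1:ℝ) 0) (fun t => |t| ^ (-(4:ℝ)⁻¹ : ℝ)) := by
      funext t
      by_cases ht : t ∈ Icc (-1:ℝ) 0
      · rw [Set.indicator_of_mem ht]
        have : -t ∈ Icc (0:ℝ) 1 := ⟨by linarith [ht.2], by linarith [ht.1]⟩
        rw [Set.indicator_of_mem this, abs_neg]
      · have : -t ∉ Icc (0:ℝ) 1 := by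
          simp only [Set.mem_Icc, not_and_or, not_le] at ht ⊢
          rcases ht with h | h
          · right; linarith
          · left; linarith
        rw [Set.indicator_of_notMem ht, Set.indicator_of_notMem this]
    rw [h4] at h3
    rwa [integrable_indicator_iff measurableSet_Icc] at h3
  · have hb : IntervalIntegrable (fun x : ℝ => x ^ (-(4:ℝ)⁻¹ : ℝ)) volume 0 1 :=
      intervalIntegral.intervalIntegrable_rpow' (by norm_num)
    have := (intervalIntegrable_iff_integrableOn_Icc_of_le (by norm_num : (0:ℝ) ≤ 1)).mp hb
    apply this.congr_fun ?_ measurableSet_Icc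
    intro t ht
    simp only []
    rw [abs_of_nonneg ht.1]

noncomputable def hh : R2 → ℝ := fun u => g1 (u 0) * g1 (u 1)

lemma hh_nonneg (u : R2) : 0 ≤ hh u := mul_nonneg (g1_nonneg _) (g1_nonneg _)

lemma coord_meas (i : Fin 2) : Measurable fun u : R2 => u i :=
  (continuous_apply i).measurable.comp (MeasurableEquiv.toLp 2 (Fin 2 → ℝ)).symm.measurable

lemma hh_meas : Measurable hh := by
  unfold hh
  exact (g1_meas.comp (coord_meas 0)).mul (g1_meas.comp (coord_meas 1))

noncomputable def eqR : R2 ≃ᵐ ℝ × ℝ :=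
  (MeasurableEquiv.toLp 2 (Fin 2 → ℝ)).symm.trans (MeasurableEquiv.piFinTwo fun _ => ℝ)

lemma mpR : MeasurePreserving eqR volume volume :=
  (volume_preserving_piFinTwo _).comp (EuclideanSpace.volume_preserving_symm_measurableEquiv_toLp _)

lemma eqR_apply (u : R2) : eqR u = (u 0, u 1) := rfl

lemma hh_int : Integrable hh := by
  have hprod : Integrable (fun p : ℝ × ℝ => g1 p.1 * g1 p.2) volume := by
    rw [MeasureTheory.Measure.volume_eq_prod]
    exact g1_int.mul_prod g1_int
  have := (mpR.integrable_comp_emb eqR.measurableEmbedding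
    (g := fun p : ℝ × ℝ => g1 p.1 * g1 p.2)).mpr hprod
  exact this

lemma null_coord0 (c : ℝ) : volume {z : R2 | z 0 = c} = 0 := by
  have hs : {z : R2 | z 0 = c} = eqR ⁻¹' ({c} ×ˢ (univ : Set ℝ)) := by
    ext z; simp [eqR_apply, eq_comm]
  rw [hs, mpR.measure_preimage ((measurableSet_singleton c).prod MeasurableSet.univ).nullMeasurableSet]
  rw [MeasureTheory.Measure.volume_eq_prod, MeasureTheory.Measure.prod_prod]
  simp

lemma null_coord1 (c : ℝ) : volume {z : R2 | z 1 = c} = 0 := by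
  have hs : {z : R2 | z 1 = c} = eqR ⁻¹' ((univ : Set ℝ) ×ˢ {c}) := by
    ext z; simp [eqR_apply, eq_comm]
  rw [hs, mpR.measure_preimage (MeasurableSet.univ.prod (measurableSet_singleton c)).nullMeasurableSet]
  rw [MeasureTheory.Measure.volume_eq_prod, MeasureTheory.Measure.prod_prod]
  simp

lemma coord_le_norm (u : R2) (i : Fin 2) : |u i| ≤ ‖u‖ := by
  rw [EuclideanSpace.norm_eq]
  rw [show |u i| = √(|u i| ^ 2) by rw [Real.sqrt_sq_eq_abs, abs_abs]]
  apply Real.sqrt_le_sqrt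
  have : |u i| ^ 2 = ‖u i‖ ^ 2 := by rw [Real.norm_eq_abs]
  rw [this]
  exact Finset.single_le_sum (f := fun j => ‖u j‖ ^ 2) (fun j _ => by positivity) (Finset.mem_univ i)

lemma ae_good : ∀ᵐ p : R2 × R2 ∂(volume : Measure (R2 × R2)),
    (p.1 - p.2) 0 ≠ 0 ∧ (p.1 - p.2) 1 ≠ 0 := by
  rw [ae_iff]
  have hsub : {p : R2 × R2 | ¬((p.1 - p.2) 0 ≠ 0 ∧ (p.1 - p.2) 1 ≠ 0)} ⊆
      {p : R2 × R2 | (p.1 - p.2) 0 = 0} ∪ {p : R2 × R2 | (p.1 - p.2) 1 = 0} := by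
    intro p hp
    simp only [Set.mem_setOf_eq, not_and_or, not_not] at hp
    rcases hp with h | h
    · exact Or.inl h
    · exact Or.inr h
  apply measure_mono_null hsub
  apply measure_union_null
  · rw [MeasureTheory.Measure.volume_eq_prod]
    have hm : MeasurableSet {p : R2 × R2 | (p.1 - p.2) 0 = 0} := by
      apply measurableSet_eq_fun
      · exact (coord_meas 0).comp (measurable_fst.sub measurable_snd)
      · exact measurable_const
    rw [MeasureTheory.Measure.measure_prod_null hm]
    apply ae_of_all
    intro y
    have : (Prod.mk y ⁻¹' {p : R2 × R2 | (p.1 - p.2) 0 = 0}) = {z : R2 | z 0 = y 0} := by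
      ext z
      simp only [Set.mem_preimage, Set.mem_setOf_eq, PiLp.sub_apply]
      constructor <;> intro h <;> linarith
    show volume (Prod.mk y ⁻¹' {p : R2 × R2 | (p.1 - p.2) 0 = 0}) = 0
    rw [this, null_coord0]
  · rw [MeasureTheory.Measure.volume_eq_prod]
    have hm : MeasurableSet {p : R2 × R2 | (p.1 - p.2) 1 = 0} := by
      apply measurableSet_eq_fun
      · exact (coord_meas 1).comp (measurable_fst.sub measurable_snd)
      · exact measurable_const
    rw [MeasureTheory.Measure.measure_prod_null hm]
    apply ae_of_all
    intro y
    have : (Prod.mk y ⁻¹' {p : R2 × R2 | (p.1 - p.2) 1 = 0}) = {z : R2 | z 1 = y 1} := by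
      ext z
      simp only [Set.mem_preimage, Set.mem_setOf_eq, PiLp.sub_apply]
      constructor <;> intro h <;> linarith
    show volume (Prod.mk y ⁻¹' {p : R2 × R2 | (p.1 - p.2) 1 = 0}) = 0
    rw [this, null_coord1]

lemma neg_log_le {t : ℝ} (ht : 0 < t) : -Real.log t ≤ 2 * t ^ (-(2:ℝ)⁻¹ : ℝ) := by
  have h1 : Real.log (t ^ (-(2:ℝ)⁻¹ : ℝ)) ≤ t ^ (-(2:ℝ)⁻¹ : ℝ) - 1 :=
    Real.log_le_sub_one_of_pos (Real.rpow_pos_of_pos ht _)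
  rw [Real.log_rpow ht] at h1
  have h2 : (0:ℝ) < t ^ (-(2:ℝ)⁻¹ : ℝ) := Real.rpow_pos_of_pos ht _
  nlinarith

lemma key_ptwise {y z : R2} (h0 : (y - z) 0 ≠ 0) (h1 : (y - z) 1 ≠ 0) :
    |Real.log (1 / ‖y - z‖)| ≤
      2 * hh (y - z) + (Real.log (2 + ‖y‖) + Real.log (2 + ‖z‖)) := by
  set u := y - z with hu
  have hune : u ≠ 0 := fun h => h0 (by rw [h]; rfl)
  have ht : 0 < ‖u‖ := norm_pos_iff.mpr hune
  rw [one_div, Real.log_inv, abs_neg]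
  have hly : 0 ≤ Real.log (2 + ‖y‖) := Real.log_nonneg (by linarith [norm_nonneg y])
  have hlz : 0 ≤ Real.log (2 + ‖z‖) := Real.log_nonneg (by linarith [norm_nonneg z])
  rcases le_or_gt ‖u‖ 1 with hle | hgt
  · have hlt : Real.log ‖u‖ ≤ 0 := Real.log_nonpos ht.le hle
    rw [abs_of_nonpos hlt]
    have h2 : -Real.log ‖u‖ ≤ 2 * ‖u‖ ^ (-(2:ℝ)⁻¹ : ℝ) := neg_log_le ht
    have h3 : ‖u‖ ^ (-(2:ℝ)⁻¹ : ℝ) ≤ hh u := by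
      have hc0 : |u 0| ≤ ‖u‖ := coord_le_norm u 0
      have hc1 : |u 1| ≤ ‖u‖ := coord_le_norm u 1
      have hm0 : u 0 ∈ Icc (-1:ℝ) 1 := abs_le.mp (hc0.trans hle)
      have hm1 : u 1 ∈ Icc (-1:ℝ) 1 := abs_le.mp (hc1.trans hle)
      have hp0 : (0:ℝ) < |u 0| := abs_pos.mpr h0
      have hp1 : (0:ℝ) < |u 1| := abs_pos.mpr h1
      have hhh : hh u = |u 0| ^ (-(4:ℝ)⁻¹ : ℝ) * |u 1| ^ (-(4:ℝ)⁻¹ : ℝ) := by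
        unfold hh g1
        rw [Set.indicator_of_mem hm0, Set.indicator_of_mem hm1]
      rw [hhh]
      have hprod : |u 0| * |u 1| ≤ ‖u‖ ^ (2:ℕ) := by
        have := mul_le_mul hc0 hc1 hp1.le (norm_nonneg u)
        nlinarith
      have h4 : (‖u‖ ^ (2:ℕ)) ^ (-(4:ℝ)⁻¹ : ℝ) ≤ (|u 0| * |u 1|) ^ (-(4:ℝ)⁻¹ : ℝ) :=
        Real.rpow_le_rpow_of_nonpos (by positivity) hprod (by norm_num)
      have h5 : (‖u‖ ^ (2:ℕ)) ^ (-(4:ℝ)⁻¹ : ℝ) = ‖u‖ ^ (-(2:ℝ)⁻¹ : ℝ) := by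
        rw [← Real.rpow_natCast ‖u‖ 2, ← Real.rpow_mul ht.le]
        norm_num
      rw [h5] at h4
      rw [Real.mul_rpow (abs_nonneg _) (abs_nonneg _)] at h4
      exact h4
    linarith
  · rw [abs_of_nonneg (Real.log_nonneg hgt.le)]
    have hub : ‖u‖ ≤ (2 + ‖y‖) * (2 + ‖z‖) := by
      have h6 : ‖u‖ ≤ ‖y‖ + ‖z‖ := norm_sub_le y z
      nlinarith [norm_nonneg y, norm_nonneg z]
    have h7 : Real.log ‖u‖ ≤ Real.log ((2 + ‖y‖) * (2 + ‖z‖)) :=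
      Real.log_le_log ht hub
    rw [Real.log_mul (by positivity) (by positivity)] at h7
    have := hh_nonneg u
    linarith

def Dk (σ : ℝ) : R2 × R2 → ℝ := fun p =>
  (2 * hh (p.1 - p.2) + (Real.log (2 + ‖p.1‖) + Real.log (2 + ‖p.2‖))) * (wt σ p.1 * wt σ p.2)

lemma Dk_nonneg (σ : ℝ) (p : R2 × R2) : 0 ≤ Dk σ p := by
  unfold Dk
  have := hh_nonneg (p.1 - p.2)
  have hly : 0 ≤ Real.log (2 + ‖p.1‖) := Real.log_nonneg (by linarith [norm_nonneg p.1])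
  have hlz : 0 ≤ Real.log (2 + ‖p.2‖) := Real.log_nonneg (by linarith [norm_nonneg p.2])
  have := wt_nonneg σ p.1
  have := wt_nonneg σ p.2
  positivity

lemma ptw_bound {σ : ℝ} (hσ : 1 < σ) (y z : R2) :
    hh (y - z) * (wt σ y * wt σ z) ≤ wt σ y * hh (y - z) := by
  have h1 := hh_nonneg (y - z)
  have h2 := wt_nonneg σ y
  have h3 := wt_nonneg σ z
  have h4 := wt_le_one hσ z
  calc hh (y - z) * (wt σ y * wt σ z) ≤ hh (y - z) * (wt σ y * 1) := by
        apply mul_le_mul_of_nonneg_left ?_ h1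
        apply mul_le_mul_of_nonneg_left h4 h2
    _ = wt σ y * hh (y - z) := by ring

lemma slice_int {σ : ℝ} (hσ : 1 < σ) (y : R2) :
    Integrable (fun z : R2 => hh (y - z) * (wt σ y * wt σ z)) volume := by
  have hbase : Integrable (fun z : R2 => hh (y - z)) volume := hh_int.comp_sub_left y
  apply Integrable.mono' (hbase.const_mul (wt σ y))
  · apply Measurable.aestronglyMeasurable
    exact (hh_meas.comp (measurable_const.sub measurable_id)).mul
      (measurable_const.mul (wt_cont σ).measurable)
  · apply ae_of_all
    intro z
    have h1 := hh_nonneg (y - z)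
    have h2 := wt_nonneg σ y
    have h3 := wt_nonneg σ z
    rw [Real.norm_eq_abs, abs_of_nonneg (by positivity)]
    exact ptw_bound hσ y z

lemma hhA_int {σ : ℝ} (hσ : 1 < σ) :
    Integrable (fun p : R2 × R2 => hh (p.1 - p.2) * (wt σ p.1 * wt σ p.2))
      (volume : Measure (R2 × R2)) := by
  rw [MeasureTheory.Measure.volume_eq_prod]
  have hmeas : AEStronglyMeasurable
      (fun p : R2 × R2 => hh (p.1 - p.2) * (wt σ p.1 * wt σ p.2))
      ((volume : Measure R2).prod volume) := by
    apply Measurable.aestronglyMeasurable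
    exact (hh_meas.comp (measurable_fst.sub measurable_snd)).mul
      (((wt_cont σ).measurable.comp measurable_fst).mul
        ((wt_cont σ).measurable.comp measurable_snd))
  refine (integrable_prod_iff hmeas).mpr ⟨?_, ?_⟩
  · exact ae_of_all _ (fun y => slice_int hσ y)
  · have hCint : Integrable (fun y : R2 => (∫ z : R2, hh z) * wt σ y) :=
      (wt_int hσ).const_mul _
    apply Integrable.mono' hCint
    · exact hmeas.norm.integral_prod_right'
    · apply ae_of_all
      intro y
      have hbase : Integrable (fun z : R2 => hh (y - z)) volume := hh_int.comp_sub_left y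
      have hb2 := slice_int hσ y
      rw [Real.norm_eq_abs]
      have hnn : 0 ≤ ∫ z : R2, ‖hh (y - z) * (wt σ y * wt σ z)‖ := by positivity
      rw [abs_of_nonneg hnn]
      have hstep : (∫ z : R2, ‖hh (y - z) * (wt σ y * wt σ z)‖) ≤
          ∫ z : R2, wt σ y * hh (y - z) := by
        apply integral_mono hb2.norm (hbase.const_mul (wt σ y))
        intro z
        have h1 := hh_nonneg (y - z)
        have h2 := wt_nonneg σ y
        have h3 := wt_nonneg σ z
        simp only [Real.norm_eq_abs]
        rw [abs_of_nonneg (by positivity)]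
        exact ptw_bound hσ y z
      have hid : (∫ z : R2, wt σ y * hh (y - z)) = wt σ y * ∫ z : R2, hh (y - z) :=
        integral_const_mul _ _
      have hid2 : (∫ z : R2, hh (y - z)) = ∫ z : R2, hh z :=
        integral_sub_left_eq_self hh volume y
      calc (∫ z : R2, ‖hh (y - z) * (wt σ y * wt σ z)‖)
          ≤ wt σ y * ∫ z : R2, hh (y - z) := by rw [← hid]; exact hstep
        _ = (∫ z : R2, hh z) * wt σ y := by rw [hid2]; ring

lemma log2_cont : Continuous (fun y : R2 => Real.log (2 + ‖y‖)) :=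
  (continuous_const.add continuous_norm).log (fun y => by show (2:ℝ) + ‖y‖ ≠ 0; positivity)

lemma Dk_int {σ : ℝ} (hσ : 1 < σ) : Integrable (Dk σ) (volume : Measure (R2 × R2)) := by
  have hre : Dk σ = fun p : R2 × R2 =>
      2 * (hh (p.1 - p.2) * (wt σ p.1 * wt σ p.2)) +
      ((Real.log (2 + ‖p.1‖) * wt σ p.1) * wt σ p.2 +
        wt σ p.1 * (Real.log (2 + ‖p.2‖) * wt σ p.2)) := by
    funext p; unfold Dk; ring
  rw [hre]
  have hB : Integrable (fun p : R2 × R2 => (Real.log (2 + ‖p.1‖) * wt σ p.1) * wt σ p.2)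
      (volume : Measure (R2 × R2)) := by
    rw [MeasureTheory.Measure.volume_eq_prod]
    exact (logwt_int hσ).mul_prod (wt_int hσ)
  have hC : Integrable (fun p : R2 × R2 => wt σ p.1 * (Real.log (2 + ‖p.2‖) * wt σ p.2))
      (volume : Measure (R2 × R2)) := by
    rw [MeasureTheory.Measure.volume_eq_prod]
    exact (wt_int hσ).mul_prod (logwt_int hσ)
  exact (((hhA_int hσ).const_mul 2).add (hB.add hC))

lemma K_meas : Measurable (fun p : R2 × R2 => Real.log (1 / ‖p.1 - p.2‖)) := by
  apply Real.measurable_log.comp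
  apply Measurable.div measurable_const
  exact (continuous_fst.sub continuous_snd).norm.measurable

lemma int_Kfg {σ : ℝ} (hσ : 1 < σ) {f g : R2 → ℝ}
    (hf : AEStronglyMeasurable f volume) (hg : AEStronglyMeasurable g volume)
    (hfb : ∀ y, |f y| ≤ wt σ y) (hgb : ∀ y, |g y| ≤ wt σ y) :
    Integrable (fun p : R2 × R2 => Real.log (1 / ‖p.1 - p.2‖) * (f p.1 * g p.2))
      (volume : Measure (R2 × R2)) := by
  apply Integrable.mono' (Dk_int hσ)
  · have : AEStronglyMeasurable (fun p : R2 × R2 => f p.1 * g p.2)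
        (volume : Measure (R2 × R2)) := by
      rw [MeasureTheory.Measure.volume_eq_prod]
      exact hf.comp_fst.mul hg.comp_snd
    exact K_meas.aestronglyMeasurable.mul this
  · filter_upwards [ae_good] with p hp
    obtain ⟨h0, h1⟩ := hp
    have hK := key_ptwise h0 h1
    have hKnn : (0:ℝ) ≤ |Real.log (1 / ‖p.1 - p.2‖)| := abs_nonneg _
    have hf1 := hfb p.1
    have hg2 := hgb p.2
    have hw1 := wt_nonneg σ p.1
    have hw2 := wt_nonneg σ p.2
    rw [Real.norm_eq_abs, abs_mul, abs_mul]
    calc |Real.log (1 / ‖p.1 - p.2‖)| * (|f p.1| * |g p.2|)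
        ≤ (2 * hh (p.1 - p.2) + (Real.log (2 + ‖p.1‖) + Real.log (2 + ‖p.2‖))) *
            (wt σ p.1 * wt σ p.2) := by
          apply mul_le_mul hK ?_ (by positivity) ?_
          · exact mul_le_mul hf1 hg2 (abs_nonneg _) hw1
          · have := hh_nonneg (p.1 - p.2)
            have hly : 0 ≤ Real.log (2 + ‖p.1‖) := Real.log_nonneg (by linarith [norm_nonneg p.1])
            have hlz : 0 ≤ Real.log (2 + ‖p.2‖) := Real.log_nonneg (by linarith [norm_nonneg p.2])
            positivity
      _ = Dk σ p := rfl

lemma swap_eq {f g : R2 → ℝ} :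
    (∫ p : R2 × R2, Real.log (1 / ‖p.1 - p.2‖) * (f p.1 * g p.2)) =
      ∫ p : R2 × R2, Real.log (1 / ‖p.1 - p.2‖) * (g p.1 * f p.2) := by
  rw [MeasureTheory.Measure.volume_eq_prod]
  have hfe : (fun p : R2 × R2 => Real.log (1 / ‖p.1 - p.2‖) * (f p.1 * g p.2)) =
      fun p : R2 × R2 =>
        (fun q : R2 × R2 => Real.log (1 / ‖q.1 - q.2‖) * (g q.1 * f q.2)) p.swap := by
    funext p
    simp only [Prod.fst_swap, Prod.snd_swap]
    rw [norm_sub_rev]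
    ring
  rw [hfe]
  exact integral_prod_swap (μ := (volume : Measure R2)) (ν := (volume : Measure R2))
    (fun q : R2 × R2 => Real.log (1 / ‖q.1 - q.2‖) * (g q.1 * f q.2))


lemma aesm_divU {a b : R2 → ℝ} (ha : AEStronglyMeasurable a volume)
    (hb : AEStronglyMeasurable b volume) :
    AEStronglyMeasurable (fun y : R2 => a y * b y / U2 y) volume := by
  have hUinv : Continuous (fun y : R2 => (U2 y)⁻¹) :=
    U2_cont.inv₀ (fun y => (U2_pos y).ne')
  have := (ha.mul hb).mul hUinv.aestronglyMeasurable
  exact this.congr (ae_of_all _ (fun y => (div_eq_mul_inv (a y * b y) (U2 y)).symm))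

lemma intU {σ : ℝ} (hσ : 1 < σ) {a b : R2 → ℝ} (ha : AEStronglyMeasurable a volume)
    (hb : AEStronglyMeasurable b volume)
    (hab : ∀ y, |a y| ≤ wt σ y) (hbb : ∀ y, |b y| ≤ wt σ y) :
    Integrable (fun y : R2 => a y * b y / U2 y) volume := by
  have hbnd : Integrable (fun y : R2 => (1/8) * (1 + ‖y‖) ^ (-(2*σ))) volume :=
    (w2σ_int hσ).const_mul _
  apply Integrable.mono' hbnd (aesm_divU ha hb)
  apply ae_of_all
  intro y
  have hU := U2_pos y
  rw [Real.norm_eq_abs, abs_div, abs_of_pos hU, abs_mul]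
  have h2 : |a y| * |b y| ≤ wt σ y * wt σ y :=
    mul_le_mul (hab y) (hbb y) (abs_nonneg _) (wt_nonneg σ y)
  calc |a y| * |b y| / U2 y ≤ wt σ y * wt σ y / U2 y := by gcongr
    _ ≤ (1/8) * (1 + ‖y‖) ^ (-(2*σ)) := sq_bound y

lemma aesm_pair {a b : R2 → ℝ} (ha : AEStronglyMeasurable a volume)
    (hb : AEStronglyMeasurable b volume) :
    AEStronglyMeasurable (fun p : R2 × R2 => a p.1 * b p.2)
      (volume : Measure (R2 × R2)) := by
  rw [MeasureTheory.Measure.volume_eq_prod]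
  exact ha.comp_fst.mul hb.comp_snd


lemma split {σ : ℝ} (hσ : 1 < σ) {f ψ : R2 → ℝ} (hfm : AEStronglyMeasurable f volume)
    (hψm : AEStronglyMeasurable ψ volume)
    (hfb : ∀ y, |f y| ≤ wt σ y) (hψb : ∀ y, |ψ y| ≤ wt σ y) (c : ℝ) :
    ∫ y : R2, ψ y * (f y / U2 y - invLap f y + c) =
      (∫ y : R2, ψ y * f y / U2 y) -
        (1 / (2 * π)) *
          (∫ p : R2 × R2, Real.log (1 / ‖p.1 - p.2‖) * (ψ p.1 * f p.2)) +
        c * ∫ y : R2, ψ y := by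
  have hKint := int_Kfg hσ hψm hfm hψb hfb
  -- pointwise identity for ψ * invLap
  have hpt : ∀ y : R2, ψ y * invLap f y =
      (1 / (2 * π)) * ∫ z : R2, Real.log (1 / ‖y - z‖) * (ψ y * f z) := by
    intro y
    unfold invLap
    have h1 : (∫ z : R2, Real.log (1 / ‖y - z‖) * (ψ y * f z)) =
        ∫ z : R2, ψ y * (Real.log (1 / ‖y - z‖) * f z) := by
      congr 1; funext z; ring
    rw [h1, integral_const_mul]
    ring
  -- integrability pieces
  have hI1 : Integrable (fun y : R2 => ψ y * f y / U2 y) volume := intU hσ hψm hfm hψb hfb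
  have hKprod : Integrable (fun p : R2 × R2 =>
      Real.log (1 / ‖p.1 - p.2‖) * (ψ p.1 * f p.2)) ((volume : Measure R2).prod volume) := by
    rw [← MeasureTheory.Measure.volume_eq_prod]; exact hKint
  have hI2' : Integrable (fun y : R2 =>
      ∫ z : R2, Real.log (1 / ‖y - z‖) * (ψ y * f z)) volume := hKprod.integral_prod_left
  have hI2 : Integrable (fun y : R2 => ψ y * invLap f y) volume := by
    have : (fun y : R2 => ψ y * invLap f y) = fun y : R2 =>
        (1 / (2 * π)) * ∫ z : R2, Real.log (1 / ‖y - z‖) * (ψ y * f z) := funext hpt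
    rw [this]
    exact hI2'.const_mul _
  have hI3 : Integrable ψ volume := by
    apply Integrable.mono' (wt_int hσ) hψm
    exact ae_of_all _ (fun y => by rw [Real.norm_eq_abs]; exact hψb y)
  -- expand the integrand
  have hexp : (fun y : R2 => ψ y * (f y / U2 y - invLap f y + c)) =
      fun y : R2 => (ψ y * f y / U2 y - ψ y * invLap f y) + c * ψ y := by
    funext y; ring
  have hsub : Integrable (fun y : R2 => ψ y * f y / U2 y - ψ y * invLap f y) volume :=
    hI1.sub hI2
  rw [hexp, integral_add hsub (hI3.const_mul c), integral_sub hI1 hI2,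
    integral_const_mul]
  -- Fubini for the invLap term
  have hful : (∫ y : R2, ψ y * invLap f y) = (1 / (2 * π)) *
      ∫ p : R2 × R2, Real.log (1 / ‖p.1 - p.2‖) * (ψ p.1 * f p.2) := by
    have h3 : (∫ y : R2, ψ y * invLap f y) =
        ∫ y : R2, (1 / (2 * π)) * ∫ z : R2, Real.log (1 / ‖y - z‖) * (ψ y * f z) := by
      congr 1; funext y; exact hpt y
    rw [h3, integral_const_mul]
    congr 1
    have h4 := MeasureTheory.integral_integral (μ := (volume : Measure R2))
      (ν := (volume : Measure R2))
      (f := fun y z => Real.log (1 / ‖y - z‖) * (ψ y * f z)) hKprod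
    rw [h4, ← MeasureTheory.Measure.volume_eq_prod]
  rw [hful]


theorem statement11 (σ : ℝ) (hσ : 1 < σ)
    (I : Set ℝ) (hIopen : IsOpen I) (hIinterval : I.OrdConnected)
    (φ φτ : R2 → ℝ → ℝ)
    (hcont : ∀ τ ∈ I, Continuous fun y => φ y τ)
    (hmass : ∀ τ ∈ I, (∫ y : R2, φ y τ) = 0)
    (hbound : ∀ (y : R2), ∀ τ ∈ I, |φ y τ| ≤ (1 + ‖y‖) ^ (-(2 + σ)))
    (hderiv : ∀ (y : R2), ∀ τ ∈ I, HasDerivAt (φ y) (φτ y τ) τ)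
    (hbound' : ∀ (y : R2), ∀ τ ∈ I, |φτ y τ| ≤ (1 + ‖y‖) ^ (-(2 + σ)))
    (gperp : R2 → ℝ → ℝ)
    (hg : ∀ (y : R2) (τ : ℝ), gperp y τ =
      φ y τ / U2 y - invLap (fun z => φ z τ) y +
        (1 / (8 * π)) * ∫ z : R2, Γ0 z * φ z τ) :
    ∀ τ ∈ I, HasDerivAt (fun τ' => ∫ y : R2, φ y τ' * gperp y τ')
      (2 * ∫ y : R2, φτ y τ * gperp y τ) τ := by
  classical
  intro τ hτ
  obtain ⟨ε, hε, hball⟩ := Metric.isOpen_iff.mp hIopen τ hτ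
  have hIn : I ∈ 𝓝 τ := hIopen.mem_nhds hτ
  have hbI : ∀ t ∈ I, ∀ y : R2, |φ y t| ≤ wt σ y := fun t ht y => hbound y t ht
  have hbI' : ∀ t ∈ I, ∀ y : R2, |φτ y t| ≤ wt σ y := fun t ht y => hbound' y t ht
  have hφm : AEStronglyMeasurable (fun y : R2 => φ y τ) volume :=
    (hcont τ hτ).aestronglyMeasurable
  -- measurability of the time derivative at τ
  have hφτm : AEStronglyMeasurable (fun y : R2 => φτ y τ) volume := by
    apply aestronglyMeasurable_of_tendsto_ae (u := 𝓝[≠] τ)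
      (f := fun t (y : R2) => if t ∈ I then (φ y t - φ y τ) / (t - τ) else 0)
    · intro t
      by_cases ht : t ∈ I
      · simp only [ht, if_true]
        exact (((hcont t ht).sub (hcont τ hτ)).div_const _).aestronglyMeasurable
      · simp only [ht, if_false]
        exact aestronglyMeasurable_const
    · apply ae_of_all
      intro y
      have hslope := hasDerivAt_iff_tendsto_slope.mp (hderiv y τ hτ)
      apply hslope.congr'
      have hev : ∀ᶠ t in 𝓝[≠] τ, t ∈ I :=
        eventually_nhdsWithin_of_eventually_nhds (eventually_of_mem hIn (fun x hx => hx))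
      filter_upwards [hev] with t ht
      rw [slope_def_field, if_pos ht]
  -- mass of φτ at τ is zero
  have hmassD := hasDerivAt_integral_of_dominated_loc_of_deriv_le
    (μ := (volume : Measure R2)) (F := fun t (y : R2) => φ y t)
    (F' := fun t (y : R2) => φτ y t) (bound := wt σ) (Metric.ball_mem_nhds τ hε)
    (by filter_upwards [hIn] with t ht; exact (hcont t ht).aestronglyMeasurable)
    (Integrable.mono' (wt_int hσ) hφm
      (ae_of_all _ (fun y => by rw [Real.norm_eq_abs]; exact hbI τ hτ y)))
    hφτm
    (ae_of_all _ (fun y t ht => by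
      rw [Real.norm_eq_abs]; exact hbI' t (hball ht) y))
    (wt_int hσ)
    (ae_of_all _ (fun y t ht => hderiv y t (hball ht)))
  obtain ⟨hφτint, hD0⟩ := hmassD
  have hmass0 : (∫ y : R2, φτ y τ) = 0 := by
    have h0 : (fun t => ∫ y : R2, φ y t) =ᶠ[𝓝 τ] fun _ => (0 : ℝ) := by
      filter_upwards [hIn] with t ht
      exact hmass t ht
    exact (h0.hasDerivAt_iff.mp hD0).unique (hasDerivAt_const τ 0)
  -- derivative of the U2-quadratic part
  have hQ1full := hasDerivAt_integral_of_dominated_loc_of_deriv_le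
    (μ := (volume : Measure R2))
    (F := fun t (y : R2) => φ y t * φ y t / U2 y)
    (F' := fun t (y : R2) => (φτ y t * φ y t + φ y t * φτ y t) / U2 y)
    (bound := fun y : R2 => 2 * ((1/8) * (1 + ‖y‖) ^ (-(2*σ)))) (Metric.ball_mem_nhds τ hε)
    (by
      filter_upwards [hIn] with t ht
      exact (aesm_divU (hcont t ht).aestronglyMeasurable (hcont t ht).aestronglyMeasurable))
    (intU hσ hφm hφm (hbI τ hτ) (hbI τ hτ))
    (by
      have h1 := aesm_divU hφτm hφm
      have h2 := aesm_divU hφm hφτm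
      exact (h1.add h2).congr (ae_of_all _ (fun y =>
        (add_div (φτ y τ * φ y τ) (φ y τ * φτ y τ) (U2 y)).symm)))
    (ae_of_all _ (fun y t ht => by
      have htI := hball ht
      have hU := U2_pos y
      have hw := wt_nonneg σ y
      rw [Real.norm_eq_abs, abs_div, abs_of_pos hU]
      have hn : |φτ y t * φ y t + φ y t * φτ y t| ≤ 2 * (wt σ y * wt σ y) := by
        have h1 : |φτ y t * φ y t| ≤ wt σ y * wt σ y := by
          rw [abs_mul]
          exact mul_le_mul (hbI' t htI y) (hbI t htI y) (abs_nonneg _) hw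
        have h2 : |φ y t * φτ y t| ≤ wt σ y * wt σ y := by
          rw [abs_mul]
          exact mul_le_mul (hbI t htI y) (hbI' t htI y) (abs_nonneg _) hw
        calc |φτ y t * φ y t + φ y t * φτ y t| ≤
            |φτ y t * φ y t| + |φ y t * φτ y t| := abs_add_le _ _
          _ ≤ 2 * (wt σ y * wt σ y) := by linarith
      calc |φτ y t * φ y t + φ y t * φτ y t| / U2 y
          ≤ 2 * (wt σ y * wt σ y) / U2 y := by gcongr
        _ = 2 * (wt σ y * wt σ y / U2 y) := by ring
        _ ≤ 2 * ((1/8) * (1 + ‖y‖) ^ (-(2*σ))) := by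
            have := sq_bound (σ := σ) y
            linarith))
    (((w2σ_int hσ).const_mul (1/8)).const_mul 2)
    (ae_of_all _ (fun y t ht =>
      ((hderiv y t (hball ht)).mul (hderiv y t (hball ht))).div_const (U2 y)))
  obtain ⟨-, hQ1⟩ := hQ1full
  -- derivative of the kernel-quadratic part
  have hQ2full := hasDerivAt_integral_of_dominated_loc_of_deriv_le
    (μ := (volume : Measure (R2 × R2)))
    (F := fun t (p : R2 × R2) => Real.log (1 / ‖p.1 - p.2‖) * (φ p.1 t * φ p.2 t))
    (F' := fun t (p : R2 × R2) =>
      Real.log (1 / ‖p.1 - p.2‖) * (φτ p.1 t * φ p.2 t + φ p.1 t * φτ p.2 t))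
    (bound := fun p : R2 × R2 => 2 * Dk σ p) (Metric.ball_mem_nhds τ hε)
    (by
      filter_upwards [hIn] with t ht
      exact K_meas.aestronglyMeasurable.mul
        (aesm_pair (hcont t ht).aestronglyMeasurable (hcont t ht).aestronglyMeasurable))
    (int_Kfg hσ hφm hφm (hbI τ hτ) (hbI τ hτ))
    (K_meas.aestronglyMeasurable.mul ((aesm_pair hφτm hφm).add (aesm_pair hφm hφτm)))
    (by
      filter_upwards [ae_good] with p hp
      intro t ht
      have htI := hball ht
      have hK := key_ptwise hp.1 hp.2
      have hw1 := wt_nonneg σ p.1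
      have hw2 := wt_nonneg σ p.2
      rw [Real.norm_eq_abs, abs_mul]
      have hn : |φτ p.1 t * φ p.2 t + φ p.1 t * φτ p.2 t| ≤
          2 * (wt σ p.1 * wt σ p.2) := by
        have h1 : |φτ p.1 t * φ p.2 t| ≤ wt σ p.1 * wt σ p.2 := by
          rw [abs_mul]
          exact mul_le_mul (hbI' t htI p.1) (hbI t htI p.2) (abs_nonneg _) hw1
        have h2 : |φ p.1 t * φτ p.2 t| ≤ wt σ p.1 * wt σ p.2 := by
          rw [abs_mul]
          exact mul_le_mul (hbI t htI p.1) (hbI' t htI p.2) (abs_nonneg _) hw1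
        calc |φτ p.1 t * φ p.2 t + φ p.1 t * φτ p.2 t| ≤
            |φτ p.1 t * φ p.2 t| + |φ p.1 t * φτ p.2 t| := abs_add_le _ _
          _ ≤ 2 * (wt σ p.1 * wt σ p.2) := by linarith
      have hSnn : (0:ℝ) ≤ 2 * hh (p.1 - p.2) + (Real.log (2 + ‖p.1‖) + Real.log (2 + ‖p.2‖)) := by
        have := hh_nonneg (p.1 - p.2)
        have hly : 0 ≤ Real.log (2 + ‖p.1‖) := Real.log_nonneg (by linarith [norm_nonneg p.1])
        have hlz : 0 ≤ Real.log (2 + ‖p.2‖) := Real.log_nonneg (by linarith [norm_nonneg p.2])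
        positivity
      calc |Real.log (1 / ‖p.1 - p.2‖)| * |φτ p.1 t * φ p.2 t + φ p.1 t * φτ p.2 t|
          ≤ (2 * hh (p.1 - p.2) + (Real.log (2 + ‖p.1‖) + Real.log (2 + ‖p.2‖))) *
            (2 * (wt σ p.1 * wt σ p.2)) := mul_le_mul hK hn (abs_nonneg _) hSnn
        _ = 2 * Dk σ p := by unfold Dk; ring)
    ((Dk_int hσ).const_mul 2)
    (ae_of_all _ (fun p t ht =>
      ((hderiv p.1 t (hball ht)).mul (hderiv p.2 t (hball ht))).const_mul _))
  obtain ⟨-, hQ2⟩ := hQ2full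
  -- rewrite the two derivative values
  have hD1 : (∫ y : R2, (φτ y τ * φ y τ + φ y τ * φτ y τ) / U2 y) =
      2 * ∫ y : R2, φτ y τ * φ y τ / U2 y := by
    calc (∫ y : R2, (φτ y τ * φ y τ + φ y τ * φτ y τ) / U2 y)
        = ∫ y : R2, 2 * (φτ y τ * φ y τ / U2 y) := by congr 1; funext y; ring
      _ = 2 * ∫ y : R2, φτ y τ * φ y τ / U2 y := integral_const_mul _ _
  have hD2 : (∫ p : R2 × R2,
        Real.log (1 / ‖p.1 - p.2‖) * (φτ p.1 τ * φ p.2 τ + φ p.1 τ * φτ p.2 τ)) =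
      2 * ∫ p : R2 × R2, Real.log (1 / ‖p.1 - p.2‖) * (φτ p.1 τ * φ p.2 τ) := by
    have hi1 := int_Kfg hσ hφτm hφm (hbI' τ hτ) (hbI τ hτ)
    have hi2 := int_Kfg hσ hφm hφτm (hbI τ hτ) (hbI' τ hτ)
    have hstep : (∫ p : R2 × R2,
        Real.log (1 / ‖p.1 - p.2‖) * (φτ p.1 τ * φ p.2 τ + φ p.1 τ * φτ p.2 τ)) =
        (∫ p : R2 × R2, Real.log (1 / ‖p.1 - p.2‖) * (φτ p.1 τ * φ p.2 τ)) +
        ∫ p : R2 × R2, Real.log (1 / ‖p.1 - p.2‖) * (φ p.1 τ * φτ p.2 τ) := by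
      rw [← integral_add hi1 hi2]
      congr 1; funext p; ring
    rw [hstep, swap_eq (f := fun y => φ y τ) (g := fun y => φτ y τ)]
    ring
  -- eventual equality with the explicit quadratic form
  have hEq : (fun t => ∫ y : R2, φ y t * gperp y t) =ᶠ[𝓝 τ]
      (fun t => (∫ y : R2, φ y t * φ y t / U2 y) -
        (1 / (2 * π)) *
          ∫ p : R2 × R2, Real.log (1 / ‖p.1 - p.2‖) * (φ p.1 t * φ p.2 t)) := by
    filter_upwards [hIn] with t ht
    have h1 : (fun y : R2 => φ y t * gperp y t) = fun y : R2 =>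
        φ y t * (φ y t / U2 y - invLap (fun z => φ z t) y +
          ((1 / (8 * π)) * ∫ z : R2, Γ0 z * φ z t)) := by
      funext y; rw [hg y t]
    rw [h1, split hσ (hcont t ht).aestronglyMeasurable (hcont t ht).aestronglyMeasurable
      (hbI t ht) (hbI t ht) _, hmass t ht]
    ring
  rw [hEq.hasDerivAt_iff]
  have hQ := hQ1.sub (hQ2.const_mul (1 / (2 * π)))
  convert hQ using 1
  · rfl
  -- identify the derivative value
  have hsplitτ : (∫ y : R2, φτ y τ * gperp y τ) =
      (∫ y : R2, φτ y τ * φ y τ / U2 y) -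
        (1 / (2 * π)) *
          (∫ p : R2 × R2, Real.log (1 / ‖p.1 - p.2‖) * (φτ p.1 τ * φ p.2 τ)) +
        ((1 / (8 * π)) * ∫ z : R2, Γ0 z * φ z τ) * ∫ y : R2, φτ y τ := by
    have h1 : (fun y : R2 => φτ y τ * gperp y τ) = fun y : R2 =>
        φτ y τ * (φ y τ / U2 y - invLap (fun z => φ z τ) y +
          ((1 / (8 * π)) * ∫ z : R2, Γ0 z * φ z τ)) := by
      funext y; rw [hg y τ]
    rw [h1]
    exact split hσ hφm hφτm (hbI τ hτ) (hbI' τ hτ) _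
  rw [hsplitτ, hmass0, hD1, hD2]
  ring
end
end

section
/- For every w ∈ ℝ⁶ with w ≠ 0, (1/(4π)³) ∫_{ℝ⁶} e^{−|z|²/4} |w − z|^{−4} dz = |w|^{−4} (1 − e^{−|w|²/4}(1 + |w|²/4)). -/
noncomputable section
open MeasureTheory Real Complex Filter Set Topology
open scoped RealInnerProductSpace

abbrev R6 : Type := EuclideanSpace ℝ (Fin 6)

lemma hasDerivAt_G {b : ℝ} (hb : b ≠ 0) (s : ℝ) :
    HasDerivAt (fun s : ℝ => -(rexp (-(s * b)) * (s / b + 1 / b ^ 2)))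
      (s * rexp (-(s * b))) s := by
  have h0 : HasDerivAt (fun s : ℝ => -(s * b)) (-b) s := (hasDerivAt_mul_const b).neg
  have h1 : HasDerivAt (fun s : ℝ => rexp (-(s * b))) (rexp (-(s * b)) * (-b)) s := h0.exp
  have h2 : HasDerivAt (fun s : ℝ => s / b + 1 / b ^ 2) (1 / b) s :=
    ((hasDerivAt_id s).div_const b).add_const _
  have := (h1.mul h2).neg
  refine this.congr_deriv ?_
  field_simp
  ring

lemma integral_t_exp {a : ℝ} (ha : 0 < a) :
    ∫ t in Ioi (0:ℝ), t * rexp (-(t * a)) = (a ^ 2)⁻¹ := by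
  have hlim : Tendsto (fun s : ℝ => -(rexp (-(s * a)) * (s / a + 1 / a ^ 2))) atTop (𝓝 0) := by
    have h1 : Tendsto (fun x : ℝ => x * rexp (-x)) atTop (𝓝 0) := by
      simpa using tendsto_pow_mul_exp_neg_atTop_nhds_zero 1
    have h2 : Tendsto (fun x : ℝ => rexp (-x)) atTop (𝓝 0) := tendsto_exp_neg_atTop_nhds_zero
    have hsa : Tendsto (fun s : ℝ => s * a) atTop atTop := tendsto_id.atTop_mul_const ha
    have hcomb : Tendsto (fun x : ℝ => -((1 / a ^ 2) * (x * rexp (-x)) + (1 / a ^ 2) * rexp (-x)))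
        atTop (𝓝 0) := by
      have := ((h1.const_mul (1 / a ^ 2)).add (h2.const_mul (1 / a ^ 2))).neg
      simpa using this
    have := hcomb.comp hsa
    refine this.congr fun s => ?_
    have ha' := ha.ne'
    simp only [Function.comp_apply]
    field_simp
  have h := integral_Ioi_of_hasDerivAt_of_nonneg'
    (g := fun s : ℝ => -(rexp (-(s * a)) * (s / a + 1 / a ^ 2)))
    (g' := fun t : ℝ => t * rexp (-(t * a))) (a := 0)
    (fun x _ => hasDerivAt_G ha.ne' x)
    (fun x hx => by have : (0:ℝ) < x := hx; positivity) hlim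
  rw [h]
  norm_num
lemma gauss6 {b : ℝ} (hb : 0 < b) (c : ℝ) (w : R6) :
    ∫ v : R6, rexp (-b * ‖v‖ ^ 2 + c * ⟪w, v⟫) =
      (π / b) ^ 3 * rexp (c ^ 2 * ‖w‖ ^ 2 / (4 * b)) := by
  have h := GaussianFourier.integral_cexp_neg_mul_sq_norm_add (V := R6) (b := (b : ℂ))
    (by simpa using hb) (c : ℂ) w
  have h3 : ((Module.finrank ℝ R6 : ℂ)) / 2 = ((3 : ℕ) : ℂ) := by
    simp [finrank_euclideanSpace_fin]
    norm_num
  rw [h3, Complex.cpow_natCast] at h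
  rw [← Complex.ofReal_inj]
  rw [show (((π / b) ^ 3 * rexp (c ^ 2 * ‖w‖ ^ 2 / (4 * b)) : ℝ) : ℂ)
      = (↑π / ↑b) ^ (3:ℕ) * cexp (↑c ^ 2 * ↑‖w‖ ^ 2 / (4 * ↑b)) from by
    rw [Complex.ofReal_mul, Complex.ofReal_exp]; push_cast; ring]
  rw [← h]
  change ofRealLI (∫ v : R6, rexp (-b * ‖v‖ ^ 2 + c * ⟪w, v⟫)) = _
  rw [← ofRealLI.integral_comp_comm]
  congr 1
  ext v
  show ((rexp (-b * ‖v‖ ^ 2 + c * ⟪w, v⟫) : ℝ) : ℂ) = _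
  rw [Complex.ofReal_exp]
  congr 1
  push_cast
  ring

lemma gaussConv (w : R6) {t : ℝ} (ht : 0 < t) :
    ∫ z : R6, rexp (-‖z‖ ^ 2 / 4) * (t * rexp (-(t * ‖w - z‖ ^ 2))) =
      (4 * π) ^ 3 * (t * ((4 * t + 1) ^ (-3 : ℤ) * rexp (-(t * ‖w‖ ^ 2 / (4 * t + 1))))) := by
  have h41 : (0:ℝ) < 4 * t + 1 := by linarith
  have key : ∀ z : R6, rexp (-‖z‖ ^ 2 / 4) * (t * rexp (-(t * ‖w - z‖ ^ 2)))
      = (t * rexp (-(t * ‖w‖ ^ 2))) * rexp (-(t + 1/4) * ‖z‖ ^ 2 + (2 * t) * ⟪w, z⟫) := by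
    intro z
    have h2 : -‖z‖ ^ 2 / 4 + -(t * ‖w - z‖ ^ 2)
        = -(t * ‖w‖ ^ 2) + (-(t + 1/4) * ‖z‖ ^ 2 + (2 * t) * ⟪w, z⟫) := by
      rw [norm_sub_sq_real]; ring
    calc rexp (-‖z‖ ^ 2 / 4) * (t * rexp (-(t * ‖w - z‖ ^ 2)))
        = t * rexp (-‖z‖ ^ 2 / 4 + -(t * ‖w - z‖ ^ 2)) := by rw [Real.exp_add]; ring
      _ = _ := by rw [h2, Real.exp_add]; ring
  simp only [key]
  rw [MeasureTheory.integral_const_mul, gauss6 (by linarith) (2 * t) w]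
  have hexp : -(t * ‖w‖ ^ 2) + (2 * t) ^ 2 * ‖w‖ ^ 2 / (4 * (t + 1/4))
      = -(t * ‖w‖ ^ 2 / (4 * t + 1)) := by
    field_simp
    ring
  have hzp : ((4 * t + 1) : ℝ) ^ (-3 : ℤ) = ((4 * t + 1) ^ 3)⁻¹ := by
    rw [show (-3:ℤ) = -((3:ℕ):ℤ) by norm_num, zpow_neg, zpow_natCast]
  have hcoef : (π / (t + 1/4)) ^ 3 = (4 * π) ^ 3 * ((4 * t + 1) ^ 3)⁻¹ := by
    have h14 : (t + 1/4) ≠ 0 := by linarith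
    field_simp
  have e1 : rexp (-(t * ‖w‖ ^ 2)) * rexp ((2 * t) ^ 2 * ‖w‖ ^ 2 / (4 * (t + 1/4)))
      = rexp (-(t * ‖w‖ ^ 2 / (4 * t + 1))) := by rw [← Real.exp_add, hexp]
  rw [hzp, hcoef, show t * rexp (-(t * ‖w‖ ^ 2)) * ((4 * π) ^ 3 * ((4 * t + 1) ^ 3)⁻¹ *
      rexp ((2 * t) ^ 2 * ‖w‖ ^ 2 / (4 * (t + 1/4))))
      = (4 * π) ^ 3 * ((4 * t + 1) ^ 3)⁻¹ * t *
        (rexp (-(t * ‖w‖ ^ 2)) * rexp ((2 * t) ^ 2 * ‖w‖ ^ 2 / (4 * (t + 1/4)))) from by ring,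
    e1]
  ring

lemma oneD_parts {b : ℝ} (hb : 0 < b) :
    IntegrableOn (fun t : ℝ => t * ((4 * t + 1) ^ (-3 : ℤ) * rexp (-(t * b / (4 * t + 1))))) (Ioi 0)
    ∧ ∫ t in Ioi (0:ℝ), t * ((4 * t + 1) ^ (-3 : ℤ) * rexp (-(t * b / (4 * t + 1))))
      = b ^ (-2 : ℤ) * (1 - rexp (-b / 4) * (1 + b / 4)) := by
  set G : ℝ → ℝ := fun s => -(rexp (-(s * b)) * (s / b + 1 / b ^ 2)) with hG
  set F : ℝ → ℝ := fun t => G (t / (4 * t + 1)) with hF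
  have hderiv : ∀ t ∈ Ici (0:ℝ), HasDerivAt F
      (t * ((4 * t + 1) ^ (-3 : ℤ) * rexp (-(t * b / (4 * t + 1))))) t := by
    intro t ht
    have ht0 : (0:ℝ) ≤ t := ht
    have h41 : (4 * t + 1 : ℝ) ≠ 0 := by positivity
    have hu : HasDerivAt (fun t : ℝ => t / (4 * t + 1)) (((4 * t + 1) ^ 2)⁻¹) t := by
      have h2 : HasDerivAt (fun t : ℝ => 4 * t + 1) 4 t := by
        simpa using ((hasDerivAt_id t).const_mul 4).add_const 1
      have := (hasDerivAt_id t).div h2 h41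
      refine this.congr_deriv ?_
      field_simp
      rw [id_eq]; ring
    have hcomp := (hasDerivAt_G hb.ne' (t / (4 * t + 1))).comp t hu
    refine hcomp.congr_deriv ?_
    have hzp : ((4 * t + 1) : ℝ) ^ (-3 : ℤ) = ((4 * t + 1) ^ 3)⁻¹ := by
      rw [show (-3:ℤ) = -((3:ℕ):ℤ) by norm_num, zpow_neg, zpow_natCast]
    rw [hzp, show t / (4 * t + 1) * b = t * b / (4 * t + 1) from by ring,
      show ((4 * t + 1:ℝ) ^ 3)⁻¹ = (4 * t + 1)⁻¹ * ((4 * t + 1) ^ 2)⁻¹ from by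
        rw [← mul_inv]; ring_nf]
    rw [div_eq_mul_inv]
    ring
  have hnonneg : ∀ t ∈ Ioi (0:ℝ),
      0 ≤ t * ((4 * t + 1) ^ (-3 : ℤ) * rexp (-(t * b / (4 * t + 1)))) := by
    intro t ht
    have : (0:ℝ) < t := ht
    positivity
  have hulim : Tendsto (fun t : ℝ => t / (4 * t + 1)) atTop (𝓝 (1/4)) := by
    have h1 : Tendsto (fun t : ℝ => (4 + t⁻¹)⁻¹) atTop (𝓝 ((4 + 0)⁻¹)) :=
      ((tendsto_const_nhds.add tendsto_inv_atTop_zero).inv₀ (by norm_num))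
    rw [show ((4:ℝ) + 0)⁻¹ = 1/4 by norm_num] at h1
    refine h1.congr' ?_
    filter_upwards [eventually_gt_atTop (0:ℝ)] with t ht
    have h41 : (4 * t + 1 : ℝ) ≠ 0 := by positivity
    field_simp
  have hGcont : Continuous G := by
    apply Continuous.neg
    exact (Real.continuous_exp.comp (continuous_id.mul continuous_const).neg).mul
      ((continuous_id.div_const b).add continuous_const)
  have hFlim : Tendsto F atTop (𝓝 (G (1/4))) := (hGcont.tendsto _).comp hulim
  constructor
  · exact integrableOn_Ioi_deriv_of_nonneg' hderiv hnonneg hFlim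
  · rw [integral_Ioi_of_hasDerivAt_of_nonneg' hderiv hnonneg hFlim]
    have hF0 : F 0 = -(1 / b ^ 2) := by
      simp [hF, hG]
    rw [hF0, hG]
    simp only []
    have hzb : b ^ (-2 : ℤ) = (b ^ 2)⁻¹ := by
      rw [show (-2:ℤ) = -((2:ℕ):ℤ) by norm_num, zpow_neg, zpow_natCast]
    rw [hzb, show (1:ℝ)/4 * b = b/4 by ring, show -(b/4) = -b/4 by ring]
    field_simp
    ring

lemma gaussInt6 : Integrable (fun z : R6 => rexp (-‖z‖ ^ 2 / 4)) := by
  have h := (GaussianFourier.integrable_cexp_neg_mul_sq_norm_add (V := R6)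
    (b := ((1:ℂ)/4)) (by norm_num) 0 (0 : R6)).norm
  apply h.congr (Eventually.of_forall fun v => ?_)
  have harg : (-((1:ℂ)/4) * (‖v‖:ℂ) ^ 2 + 0 * ((⟪(0:R6), v⟫ : ℝ) : ℂ))
      = ((-‖v‖ ^ 2 / 4 : ℝ) : ℂ) := by push_cast; ring
  show ‖Complex.exp (-((1:ℂ)/4) * (‖v‖:ℂ) ^ 2 + 0 * ((⟪(0:R6), v⟫ : ℝ) : ℂ))‖ = rexp (-‖v‖ ^ 2 / 4)
  rw [harg, Complex.norm_exp_ofReal]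

theorem statement14 (w : R6) (hw : w ≠ 0) :
    (1 / (4 * π) ^ 3) * (∫ z : R6, Real.exp (-‖z‖ ^ 2 / 4) * ‖w - z‖ ^ (-4 : ℤ)) =
      ‖w‖ ^ (-4 : ℤ) * (1 - Real.exp (-‖w‖ ^ 2 / 4) * (1 + ‖w‖ ^ 2 / 4)) := by
  have hwn : (0:ℝ) < ‖w‖ := norm_pos_iff.mpr hw
  have hb : (0:ℝ) < ‖w‖ ^ 2 := by positivity
  set f : R6 → ℝ → ℝ := fun z t => rexp (-‖z‖ ^ 2 / 4) * (t * rexp (-(t * ‖w - z‖ ^ 2))) with hf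
  set ν : Measure ℝ := volume.restrict (Ioi 0) with hν
  -- pointwise: the t-integral recovers the negative power
  have hpt : ∀ z : R6, z ≠ w →
      rexp (-‖z‖ ^ 2 / 4) * ‖w - z‖ ^ (-4 : ℤ) = ∫ t in Ioi (0:ℝ), f z t := by
    intro z hz
    have ha : (0:ℝ) < ‖w - z‖ ^ 2 := by
      have : w - z ≠ 0 := sub_ne_zero.mpr (Ne.symm hz)
      exact pow_pos (norm_pos_iff.mpr this) 2
    rw [hf]
    simp only []
    rw [MeasureTheory.integral_const_mul, integral_t_exp ha]
    congr 1
    rw [show ((-4):ℤ) = -((4:ℕ):ℤ) by norm_num, zpow_neg, zpow_natCast]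
    congr 1
    ring
  have hae : ∀ᵐ z : R6, z ≠ w := by
    have h0 : (volume : Measure R6) {w} = 0 := measure_singleton w
    rw [ae_iff]
    convert h0 using 2
    ext z
    simp
  -- measurability of the two-variable function
  have hmeas : AEStronglyMeasurable (Function.uncurry f) ((volume : Measure R6).prod ν) := by
    apply Continuous.aestronglyMeasurable
    apply Continuous.mul
    · fun_prop
    · fun_prop
  -- integrability in z for positive t
  have hIz : ∀ t : ℝ, 0 < t → Integrable (fun z => f z t) := by
    intro t ht
    have hc : Continuous fun z : R6 => rexp (-‖z‖ ^ 2 / 4) * (t * rexp (-(t * ‖w - z‖ ^ 2))) := by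
      continuity
    refine (gaussInt6.const_mul t).mono' hc.aestronglyMeasurable (Eventually.of_forall fun z => ?_)
    have h1 : rexp (-(t * ‖w - z‖ ^ 2)) ≤ 1 :=
      Real.exp_le_one_iff.mpr (neg_nonpos.mpr (by positivity))
    have h2 : (0:ℝ) < rexp (-‖z‖ ^ 2 / 4) := Real.exp_pos _
    calc ‖f z t‖ = rexp (-‖z‖ ^ 2 / 4) * (t * rexp (-(t * ‖w - z‖ ^ 2))) :=
          Real.norm_of_nonneg (by positivity)
      _ ≤ rexp (-‖z‖ ^ 2 / 4) * (t * 1) := by gcongr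
      _ = t * rexp (-‖z‖ ^ 2 / 4) := by ring
  -- value of the inner z-integral for positive t
  have hval : ∀ t : ℝ, 0 < t → ∫ z : R6, f z t
      = (4 * π) ^ 3 * (t * ((4 * t + 1) ^ (-3 : ℤ) * rexp (-(t * ‖w‖ ^ 2 / (4 * t + 1))))) :=
    fun t ht => gaussConv w ht
  have h1d := oneD_parts hb
  -- joint integrability
  have hint : Integrable (Function.uncurry f) ((volume : Measure R6).prod ν) := by
    rw [integrable_prod_iff' hmeas]
    constructor
    · filter_upwards [ae_restrict_mem measurableSet_Ioi] with t ht
      exact hIz t ht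
    · apply Integrable.congr ((h1d.1.const_mul ((4 * π) ^ 3)))
      filter_upwards [ae_restrict_mem measurableSet_Ioi] with t ht
      rw [show (fun z : R6 => ‖Function.uncurry f (z, t)‖) = fun z => f z t from
        funext fun z => Real.norm_of_nonneg (mul_nonneg (Real.exp_pos _).le
          (mul_nonneg (le_of_lt ht) (Real.exp_pos _).le))]
      exact (hval t ht).symm
  -- swap
  have hswap : ∫ z : R6, ∫ t in Ioi (0:ℝ), f z t = ∫ t in Ioi (0:ℝ), ∫ z : R6, f z t :=
    integral_integral_swap hint
  have step1 : ∫ z : R6, rexp (-‖z‖ ^ 2 / 4) * ‖w - z‖ ^ (-4 : ℤ)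
      = ∫ z : R6, ∫ t in Ioi (0:ℝ), f z t := by
    apply integral_congr_ae
    filter_upwards [hae] with z hz
    exact hpt z hz
  have step2 : ∫ t in Ioi (0:ℝ), ∫ z : R6, f z t
      = (4 * π) ^ 3 * (‖w‖ ^ 2) ^ (-2 : ℤ) * (1 - rexp (-‖w‖ ^ 2 / 4) * (1 + ‖w‖ ^ 2 / 4)) := by
    rw [show (∫ t in Ioi (0:ℝ), ∫ z : R6, f z t)
        = ∫ t in Ioi (0:ℝ), (4 * π) ^ 3 *
            (t * ((4 * t + 1) ^ (-3 : ℤ) * rexp (-(t * ‖w‖ ^ 2 / (4 * t + 1))))) from by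
      apply integral_congr_ae
      filter_upwards [ae_restrict_mem measurableSet_Ioi] with t ht
      exact hval t ht]
    rw [MeasureTheory.integral_const_mul, h1d.2]
    ring
  have hzp4 : (‖w‖ ^ 2) ^ (-2 : ℤ) = ‖w‖ ^ (-4 : ℤ) := by
    rw [← zpow_natCast ‖w‖ 2, ← zpow_mul]
    norm_num
  rw [step1, hswap, step2, hzp4]
  have hpi : ((4:ℝ) * π) ^ 3 ≠ 0 := by positivity
  field_simp
end
end
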